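/- Every connected component of S_4 contains a parameter (a,b) for which the forward orbit of −a under P_{a,b} is unbounded; that is, every connected component of S_4 meets the escape locus S_4 \ C, where C is the connectedness locus of S_4. -/

import Mathlib

/-- The monic centered cubic polynomial `P_{a,b}(z) = z^3 - 3 a^2 z + b`. -/
noncomputable def cubicP (a b z : ℂ) : ℂ := z ^ 3 - 3 * a ^ 2 * z + b

/-- `z` has exact (minimal) period `n` under `f`. -/
def HasExactPeriod (f : ℂ → ℂ) (n : ℕ) (z : ℂ) : Prop :=
  f^[n] z = z ∧ ∀ k, 1 ≤ k → k < n → f^[k] z ≠ z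

/-- The curve `S_n` of parameters for which the critical point `a` has exact period `n`. -/
def Scurve (n : ℕ) : Set (ℂ × ℂ) :=
  {p | HasExactPeriod (cubicP p.1 p.2) n p.1}

/-! ### Auxiliary algebra: `S₄` is the zero locus of an explicit polynomial `Qfun`

Since `a` is a critical point of `P = cubicP a b`, we have the exact identity
`P(a+t) = P(a) + t²(t+3a)`.  Writing `H = P²(a) - a`, this leads to the global identity
`P⁴(a) - a = H · Qfun` with `Qfun = 1 + H·(⋯)`.  In particular `H = 0` forces `Qfun = 1`,
so the exact-period-4 locus is precisely `{Qfun = 0}` — a closed set. -/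

noncomputable def cubicH (a b : ℂ) : ℂ := cubicP a b (cubicP a b a) - a
noncomputable def cubicU (a b : ℂ) : ℂ := (cubicH a b)^2 * (cubicH a b + 3*a)
noncomputable def cubicM (a b : ℂ) : ℂ :=
  3*(cubicP a b a)^2 - 3*a^2 + 3*(cubicP a b a)*(cubicU a b) + (cubicU a b)^2
noncomputable def Qfun (a b : ℂ) : ℂ := 1 + cubicH a b * ((cubicH a b + 3*a) * cubicM a b)

lemma shiftA (a b t : ℂ) : cubicP a b (a + t) = cubicP a b a + t^2*(t + 3*a) := by
  unfold cubicP; ring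

lemma shiftB (a b y u : ℂ) :
    cubicP a b (y + u) = cubicP a b y + u*(3*y^2 - 3*a^2 + 3*y*u + u^2) := by
  unfold cubicP; ring

lemma key_identity (a b : ℂ) :
    cubicP a b (cubicP a b (cubicP a b (cubicP a b a))) - a = cubicH a b * Qfun a b := by
  have e2 : cubicP a b (cubicP a b a) = a + cubicH a b := by unfold cubicH; ring
  have e3 : cubicP a b (cubicP a b (cubicP a b a)) = cubicP a b a + cubicU a b := by
    rw [e2, shiftA]; unfold cubicU; ring
  have e4 : cubicP a b (cubicP a b (cubicP a b (cubicP a b a)))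
      = cubicP a b (cubicP a b a) + cubicU a b * cubicM a b := by
    rw [e3, shiftB]; unfold cubicM; ring
  rw [e4, e2]; unfold Qfun cubicU; ring

lemma iter1 (f : ℂ → ℂ) (x : ℂ) : f^[1] x = f x := by simp
lemma iter2 (f : ℂ → ℂ) (x : ℂ) : f^[2] x = f (f x) := by
  show f^[1+1] x = _; rw [Function.iterate_add_apply]; simp
lemma iter3 (f : ℂ → ℂ) (x : ℂ) : f^[3] x = f (f (f x)) := by
  show f^[2+1] x = _; rw [Function.iterate_add_apply, iter2]; simp
lemma iter4 (f : ℂ → ℂ) (x : ℂ) : f^[4] x = f (f (f (f x))) := by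
  show f^[3+1] x = _; rw [Function.iterate_add_apply, iter3]; simp

lemma qfun_of_H_eq_zero {a b : ℂ} (h : cubicH a b = 0) : Qfun a b = 1 := by
  unfold Qfun; rw [h]; ring

lemma scurve_eq : Scurve 4 = {p : ℂ × ℂ | Qfun p.1 p.2 = 0} := by
  ext ⟨a, b⟩
  simp only [Scurve, HasExactPeriod, Set.mem_setOf_eq]
  constructor
  · rintro ⟨h4, hk⟩
    rw [iter4] at h4
    have hH : cubicH a b ≠ 0 := by
      intro h0
      have h2 : (cubicP a b)^[2] a = a := by
        rw [iter2]; unfold cubicH at h0; linear_combination h0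
      exact hk 2 (by norm_num) (by norm_num) h2
    have := key_identity a b
    rw [h4] at this
    simp only [sub_self] at this
    rcases mul_eq_zero.mp this.symm with h | h
    · exact absurd h hH
    · exact h
  · intro hQ
    have hH : cubicH a b ≠ 0 := fun h0 => by
      rw [qfun_of_H_eq_zero h0] at hQ; exact one_ne_zero hQ
    have h4 : (cubicP a b)^[4] a = a := by
      rw [iter4]
      have := key_identity a b
      rw [hQ, mul_zero, sub_eq_zero] at this
      exact this
    refine ⟨h4, fun k hk1 hk4 hke => ?_⟩
    interval_cases k
    · rw [iter1] at hke
      apply hH; unfold cubicH; rw [hke, hke]; ring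
    · rw [iter2] at hke
      apply hH; unfold cubicH; rw [hke]; ring
    · rw [iter3] at hke
      have hfa : cubicP a b a = a := by
        have := h4
        rw [iter4, hke] at this
        exact this
      apply hH; unfold cubicH; rw [hfa, hfa]; ring

lemma Qcont : Continuous fun p : ℂ × ℂ => Qfun p.1 p.2 := by
  unfold Qfun cubicM cubicU cubicH cubicP
  fun_prop

/-! ### `Qfun a ·` as a monic polynomial of degree 24 in `b` -/

open Polynomial in
noncomputable def f1p (a : ℂ) : ℂ[X] := X + C (a^3 - 3*a^2*a)
open Polynomial in
noncomputable def f2p (a : ℂ) : ℂ[X] := (f1p a)^3 - C (3*a^2) * (f1p a) + X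
open Polynomial in
noncomputable def Hp (a : ℂ) : ℂ[X] := f2p a - C a
open Polynomial in
noncomputable def up (a : ℂ) : ℂ[X] := (Hp a)^2 * (Hp a + C (3*a))
open Polynomial in
noncomputable def Mp (a : ℂ) : ℂ[X] :=
  3*(f1p a)^2 - C (3*a^2) + 3*(f1p a)*(up a) + (up a)^2
open Polynomial in
noncomputable def qpoly (a : ℂ) : ℂ[X] := 1 + Hp a * ((Hp a + C (3*a)) * Mp a)

open Polynomial in
lemma qpoly_eval (a b : ℂ) : (qpoly a).eval b = Qfun a b := by
  simp only [qpoly, Hp, f2p, f1p, up, Mp, Qfun, cubicH, cubicM, cubicU, cubicP,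
    eval_add, eval_mul, eval_sub, eval_pow, eval_X, eval_C, eval_one, eval_ofNat]
  ring

open Polynomial in
lemma qpoly_monic (a : ℂ) : (qpoly a).Monic := by
  unfold qpoly Mp up Hp f2p f1p
  monicity!

open Polynomial in
lemma qpoly_natDegree (a : ℂ) : (qpoly a).natDegree = 24 := by
  unfold qpoly Mp up Hp f2p f1p
  compute_degree!

/-! ### Continuity of roots (via the monic factorization) -/

lemma prod_norm_lb (ε : ℝ) (hε : 0 ≤ ε) :
    ∀ (s : Multiset ℂ), (∀ x ∈ s, ε ≤ ‖x‖) → ε ^ (Multiset.card s) ≤ ‖s.prod‖ := by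
  intro s
  induction s using Multiset.induction with
  | empty => simp
  | cons c s ih =>
    intro h
    rw [Multiset.prod_cons, Multiset.card_cons, pow_succ, norm_mul, mul_comm (ε ^ _) ε]
    have h1 : ε ≤ ‖c‖ := h c (Multiset.mem_cons_self _ _)
    have h2 : ε ^ (Multiset.card s) ≤ ‖s.prod‖ := ih fun x hx => h x (Multiset.mem_cons_of_mem hx)
    exact mul_le_mul h1 h2 (pow_nonneg hε _) (le_trans hε h1)

open Polynomial in
lemma exists_root_near {a b₀ : ℂ} {ε : ℝ} (hε : 0 < ε)
    (h : ‖Qfun a b₀‖ < ε ^ 24) : ∃ r : ℂ, Qfun a r = 0 ∧ ‖b₀ - r‖ < ε := by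
  by_contra hc
  push_neg at hc
  have hmon := qpoly_monic a
  have hsp : (qpoly a).Splits := IsAlgClosed.splits _
  have hcard : Multiset.card (qpoly a).roots = 24 := by
    rw [(splits_iff_card_roots).mp hsp, qpoly_natDegree]
  have hfact := hsp.eq_prod_roots_of_monic hmon
  have heval : (qpoly a).eval b₀ = (((qpoly a).roots).map (fun r => b₀ - r)).prod := by
    conv_lhs => rw [hfact]
    rw [eval_multiset_prod, Multiset.map_map]
    simp [Function.comp]
  have hlb : ε ^ 24 ≤ ‖(qpoly a).eval b₀‖ := by
    rw [heval]
    have := prod_norm_lb ε hε.le (((qpoly a).roots).map (fun r => b₀ - r)) ?_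
    · rwa [Multiset.card_map, hcard] at this
    · rintro x hx
      obtain ⟨r, hr, rfl⟩ := Multiset.mem_map.mp hx
      have hroot : Qfun a r = 0 := by
        rw [← qpoly_eval]
        exact (mem_roots'.mp hr).2
      exact hc r hroot
  rw [qpoly_eval] at hlb
  exact absurd h (not_lt.mpr hlb)

/-! ### Quantitative escape estimates -/

section escape
variable (a b : ℂ)

noncomputable def Rad (a b : ℂ) : ℝ := Real.sqrt (3*‖a‖^2 + ‖b‖ + 2)

lemma Rad_sq : Rad a b ^ 2 = 3*‖a‖^2 + ‖b‖ + 2 := by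
  rw [Rad, Real.sq_sqrt]; positivity

lemma Rad_ge_one : 1 ≤ Rad a b := by
  rw [Rad, show (1:ℝ) = Real.sqrt 1 by simp]
  apply Real.sqrt_le_sqrt
  nlinarith [norm_nonneg a, norm_nonneg b, sq_nonneg ‖a‖]

lemma Rad_pos : 0 < Rad a b := lt_of_lt_of_le one_pos (Rad_ge_one a b)

lemma grow_step {z : ℂ} (hz : Rad a b ≤ ‖z‖) :
    2 * ‖z‖ ≤ ‖cubicP a b z‖ ∧ Rad a b ≤ ‖cubicP a b z‖ := by
  have h1 : 1 ≤ ‖z‖ := le_trans (Rad_ge_one a b) hz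
  have h2 : 3*‖a‖^2 + ‖b‖ + 2 ≤ ‖z‖^2 := by
    rw [← Rad_sq a b]
    exact pow_le_pow_left₀ (Rad_pos a b).le hz 2
  have key : 2 * ‖z‖ ≤ ‖cubicP a b z‖ := by
    have e1 : ‖z^3‖ - ‖3*a^2*z - b‖ ≤ ‖cubicP a b z‖ := by
      have : cubicP a b z = z^3 - (3*a^2*z - b) := by unfold cubicP; ring
      rw [this]
      exact norm_sub_norm_le _ _
    have e2 : ‖3*a^2*z - b‖ ≤ 3*‖a‖^2*‖z‖ + ‖b‖ := by
      apply le_trans (norm_sub_le _ _)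
      gcongr
      simp [norm_mul, norm_pow]
    have e3 : ‖z^3‖ = ‖z‖^3 := by simp [norm_pow]
    have e4 : 2*‖z‖ ≤ ‖z‖^3 - (3*‖a‖^2*‖z‖ + ‖b‖) := by
      have hz0 : 0 ≤ ‖z‖ := norm_nonneg z
      nlinarith [mul_le_mul_of_nonneg_left h2 hz0,
        mul_nonneg (norm_nonneg b) (sub_nonneg.mpr h1)]
    linarith [e1, e2, e3.symm.le, e3.le, e4]
  refine ⟨key, le_trans hz ?_⟩
  nlinarith [key, norm_nonneg z, h1]

lemma grow_iter {z : ℂ} (hz : Rad a b ≤ ‖z‖) :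
    ∀ m : ℕ, 2^m * ‖z‖ ≤ ‖(cubicP a b)^[m] z‖ ∧ Rad a b ≤ ‖(cubicP a b)^[m] z‖ := by
  intro m
  induction m with
  | zero => simpa using hz
  | succ m ih =>
    rw [Function.iterate_succ_apply']
    obtain ⟨ih1, ih2⟩ := ih
    obtain ⟨g1, g2⟩ := grow_step a b ih2
    constructor
    · calc 2^(m+1) * ‖z‖ = 2 * (2^m * ‖z‖) := by ring
        _ ≤ 2 * ‖(cubicP a b)^[m] z‖ := by linarith
        _ ≤ _ := g1
    · exact g2

lemma trap (h4 : (cubicP a b)^[4] a = a) : ‖b - 2*a^3‖ < Rad a b := by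
  by_contra hc
  push_neg at hc
  have hfa : cubicP a b a = b - 2*a^3 := by unfold cubicP; ring
  have h8 : (cubicP a b)^[8] a = a := by
    have : (cubicP a b)^[4+4] a = a := by
      rw [Function.iterate_add_apply, h4, h4]
    simpa using this
  have h7 : (cubicP a b)^[7] (cubicP a b a) = a := by
    have : (cubicP a b)^[7+1] a = a := h8
    rwa [Function.iterate_succ_apply] at this
  have hz' : Rad a b ≤ ‖cubicP a b a‖ := by rw [hfa]; exact hc
  have hgrow := (grow_iter a b hz' 7).1
  rw [h7] at hgrow
  have h128 : (2:ℝ)^7 = 128 := by norm_num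
  rw [h128] at hgrow
  have haR : ‖a‖ < Rad a b := by
    have h1 : ‖a‖^2 < Rad a b ^2 := by
      rw [Rad_sq]
      nlinarith [norm_nonneg a, norm_nonneg b]
    by_contra hh
    push_neg at hh
    exact absurd (pow_le_pow_left₀ (Rad_pos a b).le hh 2) (not_le.mpr h1)
  linarith [Rad_pos a b, hz', haR, hgrow]

lemma escape_main (h4 : (cubicP a b)^[4] a = a) (ha : 2 ≤ ‖a‖) :
    ¬ Bornology.IsBounded (Set.range fun m : ℕ => (cubicP a b)^[m] (-a)) := by
  have htrap := trap a b h4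
  have hR1 : 1 ≤ Rad a b := Rad_ge_one a b
  have hRsq := Rad_sq a b
  have hb : ‖b‖ ≤ ‖b - 2*a^3‖ + 2*‖a‖^3 := by
    calc ‖b‖ = ‖(b - 2*a^3) + 2*a^3‖ := by ring_nf
      _ ≤ ‖b - 2*a^3‖ + ‖2*a^3‖ := norm_add_le _ _
      _ = ‖b - 2*a^3‖ + 2*‖a‖^3 := by simp [norm_mul, norm_pow]
  have hRle : Rad a b ≤ 2*‖a‖^3 := by
    by_contra hcc
    push_neg at hcc
    have h16 : (16:ℝ) ≤ 2*‖a‖^3 := by nlinarith [ha]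
    have h16R : (16:ℝ) < Rad a b := lt_of_le_of_lt h16 hcc
    have h4s : 4*‖a‖^2 < Rad a b := by nlinarith [ha, hcc]
    have hprod : 0 < Rad a b * (Rad a b - 16) :=
      mul_pos (Rad_pos a b) (by linarith)
    nlinarith [hRsq, htrap, hb, hcc, h16R, h4s, hprod]
  have hfma : cubicP a b (-a) = b + 2*a^3 := by unfold cubicP; ring
  have hlarge : Rad a b ≤ ‖cubicP a b (-a)‖ := by
    rw [hfma]
    have e1 : ‖(4:ℂ)*a^3‖ - ‖2*a^3 - b‖ ≤ ‖b + 2*a^3‖ := by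
      have : (b + 2*a^3 : ℂ) = 4*a^3 - (2*a^3 - b) := by ring
      rw [this]
      exact norm_sub_norm_le _ _
    have e2 : ‖(4:ℂ)*a^3‖ = 4*‖a‖^3 := by simp [norm_mul, norm_pow]
    have e3 : ‖2*a^3 - b‖ = ‖b - 2*a^3‖ := by rw [norm_sub_rev]
    nlinarith [htrap, hRle]
  intro hbnd
  obtain ⟨CC, hCC⟩ := Bornology.IsBounded.exists_norm_le hbnd
  obtain ⟨m, hm⟩ := pow_unbounded_of_one_lt CC (one_lt_two (α := ℝ))
  have h1 := (grow_iter a b hlarge m).1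
  have h2 : (cubicP a b)^[m] (cubicP a b (-a)) = (cubicP a b)^[m+1] (-a) := by
    rw [Function.iterate_succ_apply]
  have h3 : ‖(cubicP a b)^[m+1] (-a)‖ ≤ CC := hCC _ (Set.mem_range_self _)
  rw [h2] at h1
  have h5 : (2:ℝ)^m * 1 ≤ 2^m * ‖cubicP a b (-a)‖ :=
    mul_le_mul_of_nonneg_left (le_trans hR1 hlarge) (pow_nonneg zero_le_two m)
  rw [mul_one] at h5
  linarith

lemma b_bound (h4 : (cubicP a b)^[4] a = a) (ha : ‖a‖ < 2) : ‖b‖ ≤ 22 := by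
  have htrap := trap a b h4
  have hRsq := Rad_sq a b
  have hs2 : ‖a‖^2 ≤ 4 := by nlinarith [norm_nonneg a]
  have hs3 : ‖a‖^3 ≤ 8 := by nlinarith [norm_nonneg a, hs2]
  have hb : ‖b‖ ≤ Rad a b + 2*‖a‖^3 := by
    have h2n : ‖(2:ℂ)*a^3‖ = 2*‖a‖^3 := by simp [norm_mul, norm_pow]
    calc ‖b‖ = ‖(b - 2*a^3) + 2*a^3‖ := by ring_nf
      _ ≤ ‖b - 2*a^3‖ + ‖2*a^3‖ := norm_add_le _ _
      _ ≤ Rad a b + 2*‖a‖^3 := by rw [h2n]; linarith [htrap]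
  have hR6 : Rad a b ≤ 6 := by
    by_contra hcc
    push_neg at hcc
    have hprod : 0 < Rad a b * (Rad a b - 6) := mul_pos (Rad_pos a b) (by linarith)
    nlinarith [hRsq, hb, hs2, hs3, hprod]
  linarith

end escape

attribute [irreducible] Qfun

/-! ### The topological core: no bounded connected component of the closed set `{Qfun = 0}` -/

def Vset : Set (ℂ × ℂ) := {p | Qfun p.1 p.2 = 0}

lemma Vclosed : IsClosed Vset := isClosed_singleton.preimage Qcont

lemma h4_of_Q {a b : ℂ} (hQ : Qfun a b = 0) : (cubicP a b)^[4] a = a := by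
  rw [iter4]
  have := key_identity a b
  rw [hQ, mul_zero, sub_eq_zero] at this
  exact this

open Set Metric Bornology in
lemma component_unbounded (p : ℂ × ℂ) (hp : p ∈ Vset)
    (hK : IsBounded (connectedComponentIn Vset p)) : False := by
  classical
  set K := connectedComponentIn Vset p with hKdef
  obtain ⟨r₀', hr₀'⟩ := (isBounded_iff_subset_closedBall 0).mp hK
  set r₀ : ℝ := max r₀' 0 with hr₀def
  have hr₀ : K ⊆ closedBall 0 r₀ :=
    hr₀'.trans (closedBall_subset_closedBall (le_max_left _ _))
  have hr₀0 : 0 ≤ r₀ := le_max_right _ _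
  set R : ℝ := r₀ + 2 with hRdef
  set W : Set (ℂ × ℂ) := Vset ∩ closedBall 0 R with hWdef
  have hWc : IsCompact W :=
    (isCompact_closedBall 0 R).of_isClosed_subset
      (Vclosed.inter isClosed_closedBall) inter_subset_right
  have hpK : p ∈ K := mem_connectedComponentIn hp
  have hKW : K ⊆ W := fun x hx =>
    ⟨connectedComponentIn_subset _ _ hx,
     closedBall_subset_closedBall (by linarith) (hr₀ hx)⟩
  have hpW : p ∈ W := hKW hpK
  have hKeq : K = connectedComponentIn W p := by
    apply Subset.antisymm
    · exact isPreconnected_connectedComponentIn.subset_connectedComponentIn hpK hKW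
    · exact (connectedComponentIn_mono p inter_subset_left).trans subset_rfl
  haveI : CompactSpace W := isCompact_iff_compactSpace.mp hWc
  set x₀ : W := ⟨p, hpW⟩ with hx₀def
  have hCC : Subtype.val '' connectedComponent x₀ = K := by
    rw [hKeq, connectedComponentIn_eq_image hpW]
  set Fr : Set W := {w : W | r₀ + 1 ≤ ‖(w : ℂ × ℂ)‖} with hFrdef
  have hFrClosed : IsClosed Fr := by
    have : Continuous fun w : W => ‖(w : ℂ × ℂ)‖ := continuous_subtype_val.norm
    exact isClosed_le continuous_const this
  have hFrCompact : IsCompact Fr := hFrClosed.isCompact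
  have hdisj : Fr ∩ ⋂ Z : { Z : Set W // IsClopen Z ∧ x₀ ∈ Z }, (Z : Set W) = ∅ := by
    rw [← connectedComponent_eq_iInter_isClopen x₀]
    ext w
    simp only [mem_inter_iff, mem_empty_iff_false, iff_false, not_and]
    intro hwFr hwCC
    have : (w : ℂ × ℂ) ∈ K := hCC ▸ mem_image_of_mem _ hwCC
    have h1 : ‖(w : ℂ × ℂ)‖ ≤ r₀ := by
      simpa using mem_closedBall_zero_iff.mp (hr₀ this)
    have h2 : r₀ + 1 ≤ ‖(w : ℂ × ℂ)‖ := hwFr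
    linarith
  obtain ⟨t, ht⟩ := hFrCompact.elim_finite_subfamily_closed _
    (fun Z : { Z : Set W // IsClopen Z ∧ x₀ ∈ Z } => Z.2.1.1) hdisj
  set U : Set W := ⋂ Z ∈ t, (Z : Set W) with hUdef
  have hUclopen : IsClopen U := isClopen_biInter_finset fun Z _ => Z.2.1
  have hx₀U : x₀ ∈ U := mem_iInter₂.mpr fun Z _ => Z.2.2
  have hUFr : ∀ w ∈ U, ¬ (r₀ + 1 ≤ ‖(w : ℂ × ℂ)‖) := by
    intro w hw hge
    have : w ∈ Fr ∩ ⋂ Z ∈ t, (Z : Set W) := ⟨hge, hw⟩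
    rw [ht] at this
    exact this
  set U₀ : Set (ℂ × ℂ) := Subtype.val '' U with hU₀def
  have hU₀compact : IsCompact U₀ :=
    (hUclopen.isClosed.isCompact).image continuous_subtype_val
  have hU₀V : U₀ ⊆ Vset := by
    rintro x ⟨w, _, rfl⟩; exact w.2.1
  have hU₀norm : ∀ x ∈ U₀, ‖x‖ < r₀ + 1 := by
    rintro x ⟨w, hw, rfl⟩
    exact lt_of_not_ge fun h => hUFr w hw h
  obtain ⟨O, hOopen, hOpre⟩ := isOpen_induced_iff.mp hUclopen.isOpen
  have hU₀O : U₀ = O ∩ W := by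
    rw [hU₀def, ← hOpre, Subtype.image_preimage_coe]
    exact inter_comm _ _
  set A : Set ℂ := Prod.fst '' U₀ with hAdef
  have hAne : A.Nonempty := ⟨p.1, mem_image_of_mem _ ⟨x₀, hx₀U, rfl⟩⟩
  have hAcompact : IsCompact A := hU₀compact.image continuous_fst
  have hAopen : IsOpen A := by
    rw [Metric.isOpen_iff]
    rintro a₀ ⟨x, hxU₀, rfl⟩
    obtain ⟨a₀, b₀⟩ := x
    have hxV : (a₀, b₀) ∈ Vset := hU₀V hxU₀
    have hxO : (a₀, b₀) ∈ O := (hU₀O ▸ hxU₀).1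
    obtain ⟨ε₁, hε₁pos, hε₁⟩ := Metric.isOpen_iff.mp hOopen _ hxO
    set ε : ℝ := min ε₁ 1 / 2 with hεdef
    have hεpos : 0 < ε := by positivity
    have hQ0 : Qfun a₀ b₀ = 0 := hxV
    have hcont : Continuous fun a : ℂ => Qfun a b₀ :=
      Qcont.comp (Continuous.prodMk_left b₀)
    have : ∀ᶠ a' in nhds a₀, ‖Qfun a' b₀‖ < ε ^ 24 := by
      have h24 : (0:ℝ) < ε ^ 24 := by positivity
      have := Metric.tendsto_nhds.mp (hcont.tendsto a₀)
      have h2 := this (ε ^ 24) h24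
      rw [hQ0] at h2
      filter_upwards [h2] with a' ha'
      simpa [dist_eq_norm] using ha'
    obtain ⟨δ, hδpos, hδ⟩ := Metric.eventually_nhds_iff.mp this
    refine ⟨min δ ε, by positivity, ?_⟩
    intro a' ha'
    have hd1 : dist a' a₀ < δ := lt_of_lt_of_le ha' (min_le_left _ _)
    have hd2 : dist a' a₀ < ε := lt_of_lt_of_le ha' (min_le_right _ _)
    obtain ⟨r, hrQ, hrnear⟩ := exists_root_near hεpos (hδ hd1)
    have hdist : dist (a', r) (a₀, b₀) < min ε₁ 1 := by
      rw [Prod.dist_eq]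
      apply max_lt
      · calc dist a' a₀ < ε := hd2
          _ < min ε₁ 1 := by
            have h01 : 0 < min ε₁ 1 := lt_min hε₁pos one_pos
            rw [hεdef]; linarith
      · rw [dist_eq_norm, ← norm_sub_rev]
        calc ‖b₀ - r‖ < ε := hrnear
          _ < min ε₁ 1 := by
            have h01 : 0 < min ε₁ 1 := lt_min hε₁pos one_pos
            rw [hεdef]; linarith
    have hmem : (a', r) ∈ U₀ := by
      rw [hU₀O]
      constructor
      · exact hε₁ (lt_of_lt_of_le hdist (min_le_left _ _))
      · constructor
        · exact hrQ
        · rw [mem_closedBall_zero_iff]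
          have h1 : ‖((a₀, b₀) : ℂ × ℂ)‖ < r₀ + 1 := hU₀norm _ hxU₀
          have h2 : dist ((a', r) : ℂ × ℂ) ((a₀, b₀) : ℂ × ℂ) < 1 :=
            lt_of_lt_of_le hdist (min_le_right _ _)
          calc ‖((a', r) : ℂ × ℂ)‖
              ≤ ‖((a₀, b₀) : ℂ × ℂ)‖ + dist ((a', r) : ℂ × ℂ) ((a₀, b₀) : ℂ × ℂ) := by
                rw [dist_eq_norm]
                calc ‖((a', r) : ℂ × ℂ)‖
                    = ‖((a₀, b₀) : ℂ × ℂ) + (((a', r) : ℂ × ℂ) - ((a₀, b₀) : ℂ × ℂ))‖ := by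
                      ring_nf
                  _ ≤ _ := norm_add_le _ _
            _ ≤ r₀ + 2 := by linarith
            _ = R := by rw [hRdef]
    exact ⟨(a', r), hmem, rfl⟩
  have hAclopen : IsClopen A := ⟨hAcompact.isClosed, hAopen⟩
  have hAuniv : A = univ := hAclopen.eq_univ hAne
  have : IsBounded (univ : Set ℂ) := hAuniv ▸ hAcompact.isBounded
  obtain ⟨c, hc⟩ := (isBounded_iff_subset_closedBall 0).mp this
  have h1 : ((|c| + 1 : ℝ) : ℂ) ∈ closedBall (0:ℂ) c := hc (mem_univ _)
  rw [mem_closedBall_zero_iff] at h1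
  have h2 : ‖((|c| + 1 : ℝ) : ℂ)‖ = |c| + 1 := by
    rw [Complex.norm_real, Real.norm_eq_abs,
      abs_of_nonneg (show (0:ℝ) ≤ |c| + 1 by positivity)]
  rw [h2] at h1
  have : c ≤ |c| := le_abs_self c
  linarith

/-! ### Main theorem -/

lemma scurve_eq_Vset : Scurve 4 = Vset := scurve_eq

theorem stmt_12 :
    ∀ p ∈ Scurve 4, ∃ q ∈ connectedComponentIn (Scurve 4) p,
      ¬ Bornology.IsBounded (Set.range fun m : ℕ => (cubicP q.1 q.2)^[m] (-q.1)) := by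
  rw [scurve_eq_Vset]
  intro p hp
  have hK : ¬ Bornology.IsBounded (connectedComponentIn Vset p) :=
    fun h => component_unbounded p hp h
  have hnotsub : ¬ (connectedComponentIn Vset p ⊆ Metric.closedBall 0 22) := by
    intro hsub
    exact hK ((Metric.isBounded_closedBall).subset hsub)
  obtain ⟨q, hqK, hqout⟩ := Set.not_subset.mp hnotsub
  refine ⟨q, hqK, ?_⟩
  have hqS : q ∈ Vset := connectedComponentIn_subset _ _ hqK
  have h4 : (cubicP q.1 q.2)^[4] q.1 = q.1 := h4_of_Q hqS
  have hqnorm : 22 < ‖q‖ := by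
    by_contra hle
    push_neg at hle
    exact hqout (mem_closedBall_zero_iff.mpr hle)
  have ha : 2 ≤ ‖q.1‖ := by
    by_contra hlt
    push_neg at hlt
    have hb22 : ‖q.2‖ ≤ 22 := b_bound q.1 q.2 h4 hlt
    have : ‖q‖ ≤ 22 := by
      rw [Prod.norm_def]
      exact max_le (by linarith) hb22
    linarith
  exact escape_main q.1 q.2 h4 ha
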